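/- Let X, Y be independent Gaussian vectors in R^k with diagonal covariances and LS = max_{‖w‖=1} P((X−Y)·w > 0) attained at w* with (μ(X)−μ(Y))·w* > 0. Fix a coordinate j with w*_j ≠ 0 and let X', Y' be identical in distribution to X, Y except that σ²_j(X') + σ²_j(Y') < σ²_j(X) + σ²_j(Y) while all means are unchanged. Then LS' = max_{‖w‖=1} P((X'−Y')·w > 0) > LS. -/

import Mathlib

open ProbabilityTheory

section Aux

open MeasureTheory

private lemma gauss_as_map (m : ℝ) {v : NNReal} (hv : 0 < v) :
    gaussianReal m v = Measure.map (fun x => Real.sqrt v * x + m) (gaussianReal 0 1) := by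
  have hc : (⟨(Real.sqrt v)^2, sq_nonneg _⟩ : NNReal) * 1 = v := by
    ext
    simp [Real.sq_sqrt v.2]
  have h1 : Measure.map (fun x => Real.sqrt v * x) (gaussianReal 0 1)
      = gaussianReal 0 v := by
    rw [gaussianReal_map_const_mul (Real.sqrt v)]
    rw [mul_zero]; congr 1
  have := gaussianReal_map_add_const (μ := 0) (v := v) m
  rw [zero_add] at this
  rw [← this, ← h1, Measure.map_map (by fun_prop) (by fun_prop)]
  rfl

private lemma gauss_Ioi_eq (m : ℝ) {v : NNReal} (hv : 0 < v) :
    gaussianReal m v (Set.Ioi 0) = gaussianReal 0 1 (Set.Ioi (-(m / Real.sqrt v))) := by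
  rw [gauss_as_map m hv, Measure.map_apply (by fun_prop) measurableSet_Ioi]
  congr 1
  have hs : (0:ℝ) < Real.sqrt v := Real.sqrt_pos.2 (by exact_mod_cast hv)
  ext x
  simp only [Set.mem_preimage, Set.mem_Ioi]
  rw [show -(m / Real.sqrt ↑v) = -m / Real.sqrt ↑v by ring, div_lt_iff₀ hs]
  constructor <;> intro h <;> nlinarith [mul_comm x (Real.sqrt ↑v)]

private lemma gauss_lt {m : ℝ} (hm : 0 < m) {v v' : NNReal} (hv' : 0 < v') (h : v' < v) :
    (gaussianReal m v (Set.Ioi 0)).toReal < (gaussianReal m v' (Set.Ioi 0)).toReal := by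
  have hv : 0 < v := hv'.trans h
  rw [gauss_Ioi_eq m hv, gauss_Ioi_eq m hv']
  set a := -(m / Real.sqrt v)
  set a' := -(m / Real.sqrt v')
  have hsv : (0:ℝ) < Real.sqrt v := Real.sqrt_pos.2 (by exact_mod_cast hv)
  have hsv' : (0:ℝ) < Real.sqrt v' := Real.sqrt_pos.2 (by exact_mod_cast hv')
  have haa : a' < a := by
    have : Real.sqrt v' < Real.sqrt v := by
      apply Real.sqrt_lt_sqrt (by positivity)
      exact_mod_cast h
    have := div_lt_div_of_pos_left hm hsv' this
    simp only [a, a', neg_lt_neg_iff]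
    exact this
  have hsplit : Set.Ioi a' = Set.Ioc a' a ∪ Set.Ioi a := (Set.Ioc_union_Ioi_eq_Ioi haa.le).symm
  have hdisj : Disjoint (Set.Ioc a' a) (Set.Ioi a) := by
    simp [Set.disjoint_left]
  have hmeas : gaussianReal 0 1 (Set.Ioi a')
      = gaussianReal 0 1 (Set.Ioc a' a) + gaussianReal 0 1 (Set.Ioi a) := by
    rw [hsplit, measure_union hdisj measurableSet_Ioi]
  have hpos : 0 < gaussianReal 0 1 (Set.Ioc a' a) := by
    rw [pos_iff_ne_zero]
    intro h0
    have := (gaussianReal_absolutelyContinuous' 0 (one_ne_zero)) h0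
    rw [Real.volume_Ioc] at this
    simp [ENNReal.ofReal_eq_zero, sub_nonpos] at this
    exact absurd this (not_le.2 haa)
  have hfin : gaussianReal 0 1 (Set.Ioi a') ≠ ⊤ := measure_ne_top _ _
  have : gaussianReal 0 1 (Set.Ioi a) < gaussianReal 0 1 (Set.Ioi a') := by
    rw [hmeas, add_comm]
    exact ENNReal.lt_add_right (measure_ne_top _ _) hpos.ne'
  exact ENNReal.toReal_lt_toReal (measure_ne_top _ _) hfin |>.2 this

end Aux

/-- For independent Gaussian vectors `X, Y` in `ℝ^k` with diagonal covariances,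
mean difference `u = μ(X) - μ(Y)` and per-axis variance sums `d j = σ²_j(X) + σ²_j(Y)`,
the projection `(X - Y) ⬝ w` is Gaussian with mean `u ⬝ w` and variance
`Σ_j d j * w j ^ 2`; so `P((X - Y) ⬝ w > 0)` is the mass the corresponding Gaussian
assigns to `(0, ∞)`. -/
noncomputable def sepProb (k : ℕ) (u : Fin k → ℝ) (d : Fin k → NNReal)
    (w : Fin k → ℝ) : ℝ :=
  (gaussianReal (∑ j, u j * w j) (∑ j, d j * ‖w j‖₊ ^ 2) (Set.Ioi 0)).toReal

/-- The set of unit vectors of `ℝ^k`. -/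
def unitVecs (k : ℕ) : Set (Fin k → ℝ) := {w | ∑ j, w j ^ 2 = 1}

/-- Negative correlation of the per-axis variance with linear separability
(half of Proposition 2): if `w⋆` attains the optimal linear separability
`LS = sepProb k u d w⋆` with positive projected mean gap `(μ(X)-μ(Y)) ⬝ w⋆ > 0` and
`w⋆ j ≠ 0`, and the classes are changed only in coordinate `j` so that the per-axis
variance sum strictly decreases (`d' j < d j`) while all means are unchanged, then
the new optimal linear separability `LS' = sup_{‖w‖=1} sepProb k u d' w` is strictly
larger than `LS`. -/
theorem variance_decrease_increases_separability
    (k : ℕ) (u : Fin k → ℝ) (d : Fin k → NNReal) (hd : ∀ i, 0 < d i)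
    (wstar : Fin k → ℝ) (hws : wstar ∈ unitVecs k)
    (hmax : ∀ w ∈ unitVecs k, sepProb k u d w ≤ sepProb k u d wstar)
    (hmean : 0 < ∑ j, u j * wstar j)
    (j : Fin k) (hwj : wstar j ≠ 0)
    (d' : Fin k → NNReal) (hd' : ∀ i, 0 < d' i)
    (hsame : ∀ i, i ≠ j → d' i = d i) (hdec : d' j < d j) :
    sepProb k u d wstar < sSup ((fun w => sepProb k u d' w) '' unitVecs k) := by
  have hwjn : 0 < ‖wstar j‖₊ ^ 2 := by
    have : ‖wstar j‖₊ ≠ 0 := by simpa using hwj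
    positivity
  have hVnew : 0 < ∑ i, d' i * ‖wstar i‖₊ ^ 2 := by
    apply Finset.sum_pos' (fun i _ => zero_le)
    exact ⟨j, Finset.mem_univ j, mul_pos (hd' j) hwjn⟩
  have hVlt : ∑ i, d' i * ‖wstar i‖₊ ^ 2 < ∑ i, d i * ‖wstar i‖₊ ^ 2 := by
    refine Finset.sum_lt_sum (fun i _ => ?_)
      ⟨j, Finset.mem_univ j, mul_lt_mul_of_pos_right hdec hwjn⟩
    by_cases hij : i = j
    · subst hij; exact mul_le_mul_left hdec.le _
    · rw [hsame i hij]
  have key : sepProb k u d wstar < sepProb k u d' wstar := gauss_lt hmean hVnew hVlt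
  refine key.trans_le (le_csSup ?_ ⟨wstar, hws, rfl⟩)
  refine ⟨1, ?_⟩
  rintro x ⟨w, -, rfl⟩
  have h1 : gaussianReal (∑ j, u j * w j) (∑ j, d' j * ‖w j‖₊ ^ 2) (Set.Ioi 0) ≤ 1 :=
    MeasureTheory.prob_le_one
  calc sepProb k u d' w ≤ (1 : ENNReal).toReal := ENNReal.toReal_mono (by simp) h1
    _ = 1 := by simp
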